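/- Let $K \subset F$ be a finite separable field extension with $[F:K] = n$, and let $A$ be a primitive $K$-subspace of $F$. Then $\dim_K A \leq n - \psi(F,K)$. -/
import Mathlib


/-- For a finite separable field extension `K ⊂ F` of degree `n`, any primitive
`K`-subspace `A` of `F` (i.e. `K(a) = F` for every nonzero `a ∈ A`) satisfies
`dim_K A ≤ n - ψ(F,K)`, where `ψ(F,K)` is the largest degree of a proper
intermediate field. -/
theorem stmt2 (K F : Type*) [Field K] [Field F] [Algebra K F]
    [FiniteDimensional K F] [Algebra.IsSeparable K F]
    (n : ℕ) (hn : Module.finrank K F = n)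
    (ψ : ℕ)
    (hψ : IsGreatest
      {d : ℕ | ∃ M : IntermediateField K F, M ≠ ⊤ ∧ Module.finrank K M = d} ψ)
    (A : Submodule K F)
    (hA : ∀ a ∈ A, a ≠ 0 → IntermediateField.adjoin K {a} = ⊤) :
    Module.finrank K A ≤ n - ψ := by
  obtain ⟨M, hMne, hMd⟩ := hψ.1
  have hdisj : A ⊓ (Subalgebra.toSubmodule M.toSubalgebra) = ⊥ := by
    rw [Submodule.eq_bot_iff]
    intro x ⟨hxA, hxM⟩
    by_contra hx
    apply hMne
    have : IntermediateField.adjoin K {x} ≤ M :=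
      IntermediateField.adjoin_le_iff.mpr (Set.singleton_subset_iff.mpr hxM)
    rw [hA x hxA hx] at this
    exact top_le_iff.mp this
  have hsum := Submodule.finrank_sup_add_finrank_inf_eq A
      (Subalgebra.toSubmodule M.toSubalgebra)
  rw [hdisj, finrank_bot, add_zero] at hsum
  have h1 : Module.finrank K ↥(Subalgebra.toSubmodule M.toSubalgebra) = ψ := hMd
  have h2 : Module.finrank K
      ↥(A ⊔ Subalgebra.toSubmodule M.toSubalgebra) ≤ n := by
    rw [← hn]; exact Submodule.finrank_le _
  omega
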